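/- Let f : Finset A → ℝ be a monotone submodular set function with f(∅) ≥ 0 on a finite ground set A, let k and ν be positive integers, and let T* ⊆ A be any set with |T*| = k. If k ≥ ν, then there exists a subset T ⊆ T* with |T| = ⌊k/ν⌋ such that f(T) ≥ f(T*) / ⌈k/⌊k/ν⌋⌉. -/

import Mathlib

/-- A monotone submodular function loses at most a factor `⌈k/⌊k/ν⌋⌉` when restricted
to a subset of size `⌊k/ν⌋` of an optimal set of size `k`. -/
theorem stmt12 {A : Type*} [DecidableEq A] (f : Finset A → ℝ)
    (hmono : ∀ S S' : Finset A, S ⊆ S' → f S ≤ f S')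
    (hsub : ∀ S S' : Finset A, S ⊆ S' → ∀ v ∉ S',
      f (insert v S) - f S ≥ f (insert v S') - f S')
    (hempty : 0 ≤ f ∅)
    (k ν : ℕ) (hk : 0 < k) (hν : 0 < ν) (hkν : ν ≤ k)
    (Tstar : Finset A) (hTcard : Tstar.card = k) :
    ∃ T ⊆ Tstar, T.card = k / ν ∧
      f Tstar / ((⌈(k : ℝ) / ((k / ν : ℕ) : ℝ)⌉ : ℤ) : ℝ) ≤ f T := by
  -- subadditivity
  have subadd : ∀ (T S : Finset A), f (S ∪ T) ≤ f S + f T := by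
    have key : ∀ (T S : Finset A), f (S ∪ T) - f S ≤ f T - f ∅ := by
      intro T
      induction T using Finset.induction_on with
      | empty => intro S; simp
      | insert _ _ hv ih =>
        rename_i v T
        intro S
        have h1 : S ∪ insert v T = insert v (S ∪ T) := by
          ext x; simp [or_left_comm]
        rw [h1]
        have hmarg : f (insert v (S ∪ T)) - f (S ∪ T) ≤ f (insert v T) - f T := by
          by_cases hvS : v ∈ S ∪ T
          · rw [Finset.insert_eq_self.2 hvS]
            have := hmono T (insert v T) (Finset.subset_insert _ _)
            linarith
          · exact hsub T (S ∪ T) Finset.subset_union_right v hvS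
        have := ih S
        linarith
    intro T S
    have := key T S
    linarith
  set m : ℕ := k / ν with hm
  have hm1 : 1 ≤ m := Nat.one_le_div_iff hν |>.2 hkν
  have hmk : m ≤ k := Nat.div_le_self _ _
  -- pick the best m-subset
  obtain ⟨T, hTmem, hTmax⟩ := Finset.exists_max_image (Finset.powersetCard m Tstar) f
    (Finset.powersetCard_nonempty.2 (by rw [hTcard]; exact hmk))
  rw [Finset.mem_powersetCard] at hTmem
  obtain ⟨hTsub, hTcard'⟩ := hTmem
  set M := f T with hM
  -- any subset of Tstar with card ≤ m has f ≤ M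
  have hsmall : ∀ S : Finset A, S ⊆ Tstar → S.card ≤ m → f S ≤ M := by
    intro S hS hc
    obtain ⟨U, hSU, hUT, hUcard⟩ := Finset.exists_subsuperset_card_eq hS hc
      (by rw [hTcard]; exact hmk)
    have : f U ≤ M := hTmax U (Finset.mem_powersetCard.2 ⟨hUT, hUcard⟩)
    exact le_trans (hmono S U hSU) this
  have hM0 : 0 ≤ M := le_trans hempty (hmono ∅ T (Finset.empty_subset _))
  -- key induction
  have hkey : ∀ n : ℕ, ∀ S : Finset A, S ⊆ Tstar → S.card ≤ (n + 1) * m →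
      f S ≤ (n + 1 : ℝ) * M := by
    intro n
    induction n with
    | zero => intro S hS hc; simpa using hsmall S hS (by simpa using hc)
    | succ n ih =>
      intro S hS hc
      by_cases hcase : S.card ≤ (n + 1) * m
      · have := ih S hS hcase
        push_cast
        push_cast at this
        nlinarith
      · push_neg at hcase
        have hmS : m ≤ S.card := le_trans (Nat.le_mul_of_pos_left m (Nat.succ_pos n)) hcase.le
        obtain ⟨B, hBS, hBcard⟩ := Finset.exists_subset_card_eq hmS
        have h1 : f S ≤ f B + f (S \ B) := by
          calc f S = f (B ∪ (S \ B)) := by rw [Finset.union_sdiff_of_subset hBS]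
            _ ≤ f B + f (S \ B) := subadd _ _
        have h2 : f B ≤ M := hsmall B (hBS.trans hS) hBcard.le
        have hcard2 : (S \ B).card ≤ (n + 1) * m := by
          rw [Finset.card_sdiff_of_subset hBS, hBcard]
          have he : (n + 1 + 1) * m = (n + 1) * m + m := by ring
          omega
        have h3 := ih (S \ B) ((Finset.sdiff_subset).trans hS) hcard2
        push_cast
        push_cast at h3
        linarith
  set c : ℤ := ⌈(k : ℝ) / (m : ℝ)⌉ with hc
  have hmpos : (0 : ℝ) < (m : ℝ) := by exact_mod_cast hm1
  have hc1 : 1 ≤ c := by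
    have : (0 : ℝ) < (k : ℝ) / (m : ℝ) := div_pos (by exact_mod_cast hk) hmpos
    exact Int.ceil_pos.2 this
  have hck : (k : ℝ) ≤ (c : ℝ) * m := by
    have := Int.le_ceil ((k : ℝ) / (m : ℝ))
    rw [div_le_iff₀ hmpos] at this
    exact this
  -- k ≤ c.toNat * m as naturals
  have hcnat : c = ((c.toNat : ℤ)) := (Int.toNat_of_nonneg (by linarith)).symm
  have hn1 : 1 ≤ c.toNat := by omega
  have hknat : k ≤ c.toNat * m := by
    have : (k : ℝ) ≤ ((c.toNat * m : ℕ) : ℝ) := by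
      push_cast
      rw [hcnat] at hck
      exact_mod_cast hck
    exact_mod_cast this
  have hfT : f Tstar ≤ (c.toNat : ℝ) * M := by
    have he : c.toNat - 1 + 1 = c.toNat := by omega
    have := hkey (c.toNat - 1) Tstar (Finset.Subset.refl _)
      (by rw [hTcard, he]; exact hknat)
    have h4 : ((c.toNat - 1 : ℕ) + 1 : ℝ) = (c.toNat : ℝ) := by
      have : (c.toNat - 1) + 1 = c.toNat := by omega
      exact_mod_cast this
    rwa [h4] at this
  refine ⟨T, hTsub, hTcard', ?_⟩
  have hcpos : (0 : ℝ) < (c : ℝ) := by exact_mod_cast hc1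
  rw [div_le_iff₀ hcpos]
  have : (c : ℝ) = (c.toNat : ℝ) := by exact_mod_cast hcnat
  rw [this]
  linarith
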